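/- Let A : ℝ^N → ℝ^N be a continuous vector potential and for q, x ∈ ℝ^N define λ^A(q; x) := exp(−i Γ^A[q, q+x]), where Γ^A[q, q+x] = ∫₀¹ A(q + s x)·x ds is the circulation of A along the segment from q to q+x. Assume A is C¹ and set B_{jk} := ∂_j A_k − ∂_k A_j. Then for all q, x, y ∈ ℝ^N: λ^A(q; x) · λ^A(q+x; y) · λ^A(q; x+y)^{−1} = exp(−i Γ^B⟨q, q+x, q+x+y⟩), where Γ^B⟨q, q+x, q+x+y⟩ is the flux of B through the triangle with vertices q, q+x, q+x+y, given by the parametrized formula Γ^B⟨q,q+x,q+x+y⟩ = Σ_{j,k} x_j y_k ∫₀¹∫₀¹ s B_{jk}(q + s x + s t y) dt ds. -/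

import Mathlib

open Filter

open MeasureTheory intervalIntegral Set Function

noncomputable section

lemma key {N : ℕ} (A : EuclideanSpace ℝ (Fin N) → EuclideanSpace ℝ (Fin N))
    (hA : ContDiff ℝ 1 A) (q x y : EuclideanSpace ℝ (Fin N)) :
    (∫ s in (0:ℝ)..1, (inner ℝ (A (q + s • x)) x : ℝ))
      + (∫ s in (0:ℝ)..1, (inner ℝ (A (q + x + s • y)) y : ℝ))
      - (∫ s in (0:ℝ)..1, (inner ℝ (A (q + s • (x + y))) (x + y) : ℝ))
    = ∫ p, (p.1 * ((inner ℝ (fderiv ℝ A (q + p.1 • x + (p.1 * p.2) • y) x) y : ℝ)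
             - (inner ℝ (fderiv ℝ A (q + p.1 • x + (p.1 * p.2) • y) y) x : ℝ)))
        ∂((volume.restrict (Ioc (0:ℝ) 1)).prod (volume.restrict (Ioc (0:ℝ) 1))) := by
  set μ : Measure ℝ := volume.restrict (Ioc (0:ℝ) 1) with hμ
  have hAd : Differentiable ℝ A := hA.differentiable one_ne_zero
  have hAc : Continuous A := hA.continuous
  have hA'c : Continuous (fun z => fderiv ℝ A z) := hA.continuous_fderiv one_ne_zero
  set φ : ℝ → ℝ → EuclideanSpace ℝ (Fin N) := fun s t => q + s • x + (s * t) • y with hφ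
  have hφc : Continuous (fun p : ℝ × ℝ => φ p.1 p.2) := by
    apply Continuous.add
    · exact continuous_const.add (continuous_fst.smul continuous_const)
    · exact (continuous_fst.mul continuous_snd).smul continuous_const
  set U : ℝ → ℝ → ℝ := fun s t =>
    (inner ℝ (A (φ s t)) y : ℝ) + (inner ℝ (fderiv ℝ A (φ s t) (s • y)) (x + t • y) : ℝ) with hUdef
  set P : ℝ → ℝ → ℝ := fun s t =>
    (inner ℝ (A (φ s t)) y : ℝ) + (inner ℝ (fderiv ℝ A (φ s t) (x + t • y)) (s • y) : ℝ) with hPdef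
  have hU : ∀ s t : ℝ, HasDerivAt (fun t' => (inner ℝ (A (φ s t')) (x + t' • y) : ℝ)) (U s t) t := by
    intro s t
    have hm : HasDerivAt (fun t' : ℝ => s * t') s t := by
      simpa using (hasDerivAt_id t).const_mul s
    have h1 : HasDerivAt (fun t' => φ s t') (s • y) t := by
      exact ((hm.smul_const y).const_add (q + s • x))
    have h2 : HasDerivAt (fun t' => A (φ s t')) (fderiv ℝ A (φ s t) (s • y)) t :=
      (hAd (φ s t)).hasFDerivAt.comp_hasDerivAt t h1
    have h3 : HasDerivAt (fun t' : ℝ => x + t' • y) y t := by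
      simpa using ((hasDerivAt_id t).smul_const y).const_add x
    exact h2.inner ℝ h3
  have hP : ∀ s t : ℝ, HasDerivAt (fun s' => (inner ℝ (A (φ s' t)) (s' • y) : ℝ)) (P s t) s := by
    intro s t
    have hm : HasDerivAt (fun s' : ℝ => s' * t) t s := by
      simpa using (hasDerivAt_id s).mul_const t
    have h1 : HasDerivAt (fun s' => φ s' t) (x + t • y) s := by
      have ha : HasDerivAt (fun s' : ℝ => q + s' • x) x s := by
        simpa using ((hasDerivAt_id s).smul_const x).const_add q
      exact ha.add (hm.smul_const y)
    have h2 : HasDerivAt (fun s' => A (φ s' t)) (fderiv ℝ A (φ s t) (x + t • y)) s :=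
      (hAd (φ s t)).hasFDerivAt.comp_hasDerivAt s h1
    have h3 : HasDerivAt (fun s' : ℝ => s' • y) y s := by
      simpa using (hasDerivAt_id s).smul_const y
    exact h2.inner ℝ h3
  have c1 : Continuous fun p : ℝ × ℝ => A (φ p.1 p.2) := hAc.comp hφc
  have c2 : Continuous fun p : ℝ × ℝ => fderiv ℝ A (φ p.1 p.2) := hA'c.comp hφc
  have c3 : Continuous fun p : ℝ × ℝ => (p.1 • y : EuclideanSpace ℝ (Fin N)) :=
    continuous_fst.smul continuous_const
  have c4 : Continuous fun p : ℝ × ℝ => (x + p.2 • y : EuclideanSpace ℝ (Fin N)) :=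
    continuous_const.add (continuous_snd.smul continuous_const)
  have hUc : Continuous fun p : ℝ × ℝ => U p.1 p.2 :=
    (c1.inner continuous_const).add ((c2.clm_apply c3).inner c4)
  have hPc : Continuous fun p : ℝ × ℝ => P p.1 p.2 :=
    (c1.inner continuous_const).add ((c2.clm_apply c4).inner c3)
  have prodInt : ∀ {G : ℝ × ℝ → ℝ}, Continuous G → Integrable G (μ.prod μ) := by
    intro G hG
    rw [hμ, Measure.prod_restrict]
    exact ((hG.continuousOn).integrableOn_compact
      (isCompact_Icc.prod isCompact_Icc)).mono_set
      (Set.prod_mono Ioc_subset_Icc_self Ioc_subset_Icc_self)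
  have hPint : Integrable (fun p : ℝ × ℝ => P p.1 p.2) (μ.prod μ) := prodInt hPc
  have hUint : Integrable (fun p : ℝ × ℝ => U p.1 p.2) (μ.prod μ) := prodInt hUc
  have ftcU : ∀ s : ℝ, (∫ t, U s t ∂μ)
      = (inner ℝ (A (q + s • (x + y))) (x + y) : ℝ) - (inner ℝ (A (q + s • x)) x : ℝ) := by
    intro s
    have hint : IntervalIntegrable (U s) volume 0 1 :=
      (hUc.comp (Continuous.prodMk_right s)).intervalIntegrable 0 1
    have h := intervalIntegral.integral_eq_sub_of_hasDerivAt
      (f := fun t => (inner ℝ (A (φ s t)) (x + t • y) : ℝ)) (fun t _ => hU s t) hint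
    rw [hμ, ← intervalIntegral.integral_of_le zero_le_one, h]
    simp [hφ, smul_add, add_assoc]
  have ftcP : ∀ t : ℝ, (∫ s, P s t ∂μ) = (inner ℝ (A (q + x + t • y)) y : ℝ) := by
    intro t
    have hint : IntervalIntegrable (fun s => P s t) volume 0 1 :=
      (hPc.comp (continuous_id.prodMk continuous_const)).intervalIntegrable 0 1
    have h := intervalIntegral.integral_eq_sub_of_hasDerivAt
      (f := fun s => (inner ℝ (A (φ s t)) (s • y) : ℝ)) (fun s _ => hP s t) hint
    rw [hμ, ← intervalIntegral.integral_of_le zero_le_one, h]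
    simp [hφ]
  have hPU : ∀ p : ℝ × ℝ, p.1 * ((inner ℝ (fderiv ℝ A (φ p.1 p.2) x) y : ℝ)
        - (inner ℝ (fderiv ℝ A (φ p.1 p.2) y) x : ℝ)) = P p.1 p.2 - U p.1 p.2 := by
    intro p
    simp only [hPdef, hUdef, map_add, _root_.map_smul, inner_add_left, inner_add_right,
      real_inner_smul_left, real_inner_smul_right]
    ring
  have hrhs : (∫ p, (p.1 * ((inner ℝ (fderiv ℝ A (q + p.1 • x + (p.1 * p.2) • y) x) y : ℝ)
           - (inner ℝ (fderiv ℝ A (q + p.1 • x + (p.1 * p.2) • y) y) x : ℝ))) ∂(μ.prod μ))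
      = (∫ p, P p.1 p.2 ∂(μ.prod μ)) - ∫ p, U p.1 p.2 ∂(μ.prod μ) := by
    rw [← integral_sub hPint hUint]
    exact integral_congr_ae (Filter.Eventually.of_forall fun p => hPU p)
  have hPval : (∫ p, P p.1 p.2 ∂(μ.prod μ))
      = ∫ t in (0:ℝ)..1, (inner ℝ (A (q + x + t • y)) y : ℝ) := by
    rw [MeasureTheory.integral_prod_symm _ hPint]
    simp only [ftcP]
    rw [intervalIntegral.integral_of_le zero_le_one]
  have hUval : (∫ p, U p.1 p.2 ∂(μ.prod μ))
      = (∫ s in (0:ℝ)..1, (inner ℝ (A (q + s • (x + y))) (x + y) : ℝ))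
        - ∫ s in (0:ℝ)..1, (inner ℝ (A (q + s • x)) x : ℝ) := by
    rw [MeasureTheory.integral_prod _ hUint]
    simp only [ftcU]
    rw [hμ, MeasureTheory.integral_sub, ← intervalIntegral.integral_of_le (μ := volume) zero_le_one,
      ← intervalIntegral.integral_of_le (μ := volume) zero_le_one]
    · exact ((hAc.comp (continuous_const.add (continuous_id.smul
        continuous_const))).inner continuous_const).integrableOn_Ioc
    · exact ((hAc.comp (continuous_const.add (continuous_id.smul
        continuous_const))).inner continuous_const).integrableOn_Ioc
  rw [hrhs, hPval, hUval]
  ring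

lemma fderiv_comp_eval {N : ℕ} (A : EuclideanSpace ℝ (Fin N) → EuclideanSpace ℝ (Fin N))
    (hA : ContDiff ℝ 1 A) (z w : EuclideanSpace ℝ (Fin N)) (k : Fin N) :
    fderiv ℝ (fun z => A z k) z w = (fderiv ℝ A z w) k := by
  have h := ((EuclideanSpace.proj (𝕜 := ℝ) k).hasFDerivAt.comp z
    ((hA.differentiable one_ne_zero) z).hasFDerivAt).fderiv
  have h2 : (fun z' => A z' k) = (⇑(EuclideanSpace.proj (𝕜 := ℝ) k) ∘ A) := rfl
  rw [h2, h]; rfl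

lemma inner_expand {N : ℕ} (L : EuclideanSpace ℝ (Fin N) →L[ℝ] EuclideanSpace ℝ (Fin N))
    (u v : EuclideanSpace ℝ (Fin N)) :
    (inner ℝ (L u) v : ℝ) = ∑ j, ∑ k, u j * v k * (L (EuclideanSpace.single j 1)) k := by
  have hu : u = ∑ j, u j • EuclideanSpace.single j (1:ℝ) := by
    ext i; rw [WithLp.ofLp_sum, Finset.sum_apply i Finset.univ]; simp [EuclideanSpace.single_apply]
  rw [PiLp.inner_apply]; simp only [RCLike.inner_apply, conj_trivial]
  rw [Finset.sum_comm]
  refine Finset.sum_congr rfl fun k _ => ?_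
  conv_lhs => rw [hu, map_sum, WithLp.ofLp_sum, Finset.sum_apply k Finset.univ, Finset.mul_sum]
  refine Finset.sum_congr rfl fun j _ => ?_
  have : (L (u j • EuclideanSpace.single j (1:ℝ))) k = u j * (L (EuclideanSpace.single j 1)) k := by
    rw [_root_.map_smul]; rfl
  rw [this]; ring

lemma bsum {N : ℕ} (A : EuclideanSpace ℝ (Fin N) → EuclideanSpace ℝ (Fin N))
    (hA : ContDiff ℝ 1 A)
    (B : Fin N → Fin N → EuclideanSpace ℝ (Fin N) → ℝ)
    (hB : ∀ j k q, B j k q =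
      fderiv ℝ (fun z => A z k) q (EuclideanSpace.single j 1)
        - fderiv ℝ (fun z => A z j) q (EuclideanSpace.single k 1))
    (x y z : EuclideanSpace ℝ (Fin N)) :
    ∑ j, ∑ k, x j * y k * B j k z =
      (inner ℝ (fderiv ℝ A z x) y : ℝ) - (inner ℝ (fderiv ℝ A z y) x : ℝ) := by
  simp only [hB, fderiv_comp_eval A hA]
  rw [inner_expand, inner_expand]
  simp only [mul_sub, Finset.sum_sub_distrib]
  congr 1
  rw [Finset.sum_comm]
  exact Finset.sum_congr rfl fun j _ => Finset.sum_congr rfl fun k _ => by ring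


/-- Stokes identity for the magnetic phases: if `A` is a `C¹` vector potential,
`λ^A(q; x) = exp(-i Γ^A[q, q+x])` with `Γ^A` the circulation of `A` along a
segment, and `B_{jk} = ∂ⱼA_k - ∂_kA_j`, then
`λ^A(q;x) λ^A(q+x;y) λ^A(q;x+y)⁻¹ = exp(-i Γ^B⟨q, q+x, q+x+y⟩)` where `Γ^B` is
the flux of `B` through the triangle, given by a parametrized double integral. -/
theorem stmt13 {N : ℕ} (A : EuclideanSpace ℝ (Fin N) → EuclideanSpace ℝ (Fin N))
    (hA : ContDiff ℝ 1 A)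
    (lam : EuclideanSpace ℝ (Fin N) → EuclideanSpace ℝ (Fin N) → ℂ)
    (hlam : ∀ q x, lam q x =
      Complex.exp (-Complex.I *
        ((∫ s in (0:ℝ)..1, (inner ℝ (A (q + s • x)) x : ℝ)) : ℝ)))
    (B : Fin N → Fin N → EuclideanSpace ℝ (Fin N) → ℝ)
    (hB : ∀ j k q, B j k q =
      fderiv ℝ (fun z => A z k) q (EuclideanSpace.single j 1)
        - fderiv ℝ (fun z => A z j) q (EuclideanSpace.single k 1)) :
    ∀ q x y : EuclideanSpace ℝ (Fin N),
      lam q x * lam (q + x) y * (lam q (x + y))⁻¹ =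
        Complex.exp (-Complex.I *
          ((∑ j : Fin N, ∑ k : Fin N, x j * y k *
            ∫ s in (0:ℝ)..1, ∫ τ in (0:ℝ)..1,
              s * B j k (q + s • x + (s * τ) • y)) : ℝ)) := by
  intro q x y
  have hA'c : Continuous (fun z => fderiv ℝ A z) := hA.continuous_fderiv one_ne_zero
  set μ : Measure ℝ := volume.restrict (Ioc (0:ℝ) 1) with hμ
  have hBc : ∀ j k, Continuous (B j k) := by
    intro j k
    have hBfun : B j k = fun z => (fderiv ℝ A z (EuclideanSpace.single j 1)) k
        - (fderiv ℝ A z (EuclideanSpace.single k 1)) j := by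
      funext z; rw [hB, fderiv_comp_eval A hA, fderiv_comp_eval A hA]
    rw [hBfun]
    exact ((EuclideanSpace.proj (𝕜 := ℝ) k).continuous.comp
        (hA'c.clm_apply continuous_const)).sub
      ((EuclideanSpace.proj (𝕜 := ℝ) j).continuous.comp (hA'c.clm_apply continuous_const))
  have hφc : Continuous (fun p : ℝ × ℝ =>
      (q + p.1 • x + (p.1 * p.2) • y : EuclideanSpace ℝ (Fin N))) := by
    apply Continuous.add
    · exact continuous_const.add (continuous_fst.smul continuous_const)
    · exact (continuous_fst.mul continuous_snd).smul continuous_const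
  have prodInt : ∀ {G : ℝ × ℝ → ℝ}, Continuous G → Integrable G (μ.prod μ) := by
    intro G hG
    rw [hμ, Measure.prod_restrict]
    exact ((hG.continuousOn).integrableOn_compact
      (isCompact_Icc.prod isCompact_Icc)).mono_set
      (Set.prod_mono Ioc_subset_Icc_self Ioc_subset_Icc_self)
  have iter : ∀ {G : ℝ → ℝ → ℝ}, Continuous (fun p : ℝ × ℝ => G p.1 p.2) →
      (∫ s in (0:ℝ)..1, ∫ t in (0:ℝ)..1, G s t) = ∫ p, G p.1 p.2 ∂(μ.prod μ) := by
    intro G hG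
    rw [intervalIntegral.integral_of_le zero_le_one]
    simp_rw [intervalIntegral.integral_of_le zero_le_one]
    exact MeasureTheory.integral_integral (prodInt hG)
  -- the double-integral sum equals the product integral of the inner expression
  have hD : (∑ j : Fin N, ∑ k : Fin N, x j * y k *
        ∫ s in (0:ℝ)..1, ∫ τ in (0:ℝ)..1, s * B j k (q + s • x + (s * τ) • y))
      = ∫ p, p.1 * ((inner ℝ (fderiv ℝ A (q + p.1 • x + (p.1 * p.2) • y) x) y : ℝ)
          - (inner ℝ (fderiv ℝ A (q + p.1 • x + (p.1 * p.2) • y) y) x : ℝ)) ∂(μ.prod μ) := by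
    have h1 : ∀ j k : Fin N, (∫ s in (0:ℝ)..1, ∫ τ in (0:ℝ)..1,
        s * B j k (q + s • x + (s * τ) • y))
        = ∫ p, p.1 * B j k (q + p.1 • x + (p.1 * p.2) • y) ∂(μ.prod μ) := fun j k =>
      iter (continuous_fst.mul ((hBc j k).comp hφc))
    simp_rw [h1]
    have h2 : ∀ j k : Fin N, x j * y k *
        (∫ p, p.1 * B j k (q + p.1 • x + (p.1 * p.2) • y) ∂(μ.prod μ))
        = ∫ p, x j * y k * (p.1 * B j k (q + p.1 • x + (p.1 * p.2) • y)) ∂(μ.prod μ) :=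
      fun j k => (MeasureTheory.integral_const_mul _ _).symm
    simp_rw [h2]
    have h3 : ∀ j : Fin N, (∑ k : Fin N,
        ∫ p, x j * y k * (p.1 * B j k (q + p.1 • x + (p.1 * p.2) • y)) ∂(μ.prod μ))
        = ∫ p, ∑ k : Fin N, x j * y k * (p.1 * B j k (q + p.1 • x + (p.1 * p.2) • y))
            ∂(μ.prod μ) := fun j =>
      (MeasureTheory.integral_finset_sum _ (fun k _ => prodInt
        (continuous_const.mul (continuous_fst.mul ((hBc j k).comp hφc))))).symm
    simp_rw [h3]
    rw [(MeasureTheory.integral_finset_sum (μ := μ.prod μ) Finset.univ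
      (f := fun j (p : ℝ × ℝ) => ∑ k : Fin N, x j * y k *
        (p.1 * B j k (q + p.1 • x + (p.1 * p.2) • y)))
      (fun j _ => prodInt (continuous_finset_sum _ (fun k _ =>
        continuous_const.mul (continuous_fst.mul ((hBc j k).comp hφc)))))).symm]
    refine integral_congr_ae (Filter.Eventually.of_forall fun p => ?_)
    have hb := bsum A hA B hB x y (q + p.1 • x + (p.1 * p.2) • y)
    calc (∑ j : Fin N, ∑ k : Fin N, x j * y k *
            (p.1 * B j k (q + p.1 • x + (p.1 * p.2) • y)))
        = p.1 * ∑ j : Fin N, ∑ k : Fin N, x j * y k *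
            B j k (q + p.1 • x + (p.1 * p.2) • y) := by
          rw [Finset.mul_sum]
          refine Finset.sum_congr rfl fun j _ => ?_
          rw [Finset.mul_sum]
          exact Finset.sum_congr rfl fun k _ => by ring
      _ = _ := by rw [hb]
  have hreal : (∫ s in (0:ℝ)..1, (inner ℝ (A (q + s • x)) x : ℝ))
      + (∫ s in (0:ℝ)..1, (inner ℝ (A (q + x + s • y)) y : ℝ))
      - (∫ s in (0:ℝ)..1, (inner ℝ (A (q + s • (x + y))) (x + y) : ℝ))
      = ∑ j : Fin N, ∑ k : Fin N, x j * y k *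
          ∫ s in (0:ℝ)..1, ∫ τ in (0:ℝ)..1, s * B j k (q + s • x + (s * τ) • y) := by
    rw [hD]; exact key A hA q x y
  rw [hlam, hlam, hlam, ← Complex.exp_neg, ← Complex.exp_add, ← Complex.exp_add]
  congr 1
  have hc : ((∑ j : Fin N, ∑ k : Fin N, x j * y k *
      ∫ s in (0:ℝ)..1, ∫ τ in (0:ℝ)..1, s * B j k (q + s • x + (s * τ) • y) : ℝ) : ℂ)
      = ((∫ s in (0:ℝ)..1, (inner ℝ (A (q + s • x)) x : ℝ) : ℝ) : ℂ)
      + ((∫ s in (0:ℝ)..1, (inner ℝ (A (q + x + s • y)) y : ℝ) : ℝ) : ℂ)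
      - ((∫ s in (0:ℝ)..1, (inner ℝ (A (q + s • (x + y))) (x + y) : ℝ) : ℝ) : ℂ) := by
    exact_mod_cast congrArg Complex.ofReal hreal.symm
  rw [hc]; ring
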